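/- Let R be an integral domain and let A, B, R₀, S give a lag-ℓ shift equivalence between square matrices A and B over R. Then the matrix U = [[1 + tA + ⋯ + (tA)^(ℓ-1), R₀],[-t^ℓ S, 1-tB]] over R[t] has determinant 1. -/

import Mathlib

open Polynomial Matrix

lemma pse_key {R : Type*} [CommRing R] {n m : Type*} [Fintype n] [Fintype m]
    [DecidableEq n] [DecidableEq m] (ℓ : ℕ)
    (A : Matrix n n R) (B : Matrix m m R) (R₀ : Matrix n m R) (S : Matrix m n R)
    (h1 : A ^ ℓ = R₀ * S) (h4 : S * A = B * S) :
    (Matrix.fromBlocks (∑ i ∈ Finset.range ℓ, ((X : Polynomial R) • A.map C) ^ i) (R₀.map C)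
        (-((X : Polynomial R) ^ ℓ • S.map C)) (1 - (X : Polynomial R) • B.map C)).det *
      (1 - (X : Polynomial R) • A.map C).det
      = (1 - (X : Polynomial R) • B.map C).det := by
  set tA : Matrix n n (Polynomial R) := (X : Polynomial R) • A.map C with htA
  set tB : Matrix m m (Polynomial R) := (X : Polynomial R) • B.map C with htB
  set P : Matrix n n (Polynomial R) := ∑ i ∈ Finset.range ℓ, tA ^ i with hP
  have hpowmap : (A.map (C : R →+* Polynomial R)) ^ ℓ = (A ^ ℓ).map C := by
    simpa using
      (map_pow ((C : R →+* Polynomial R).mapMatrix :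
        Matrix n n R →+* Matrix n n (Polynomial R)) A ℓ).symm
  -- block identities
  have hb11 : P * (1 - tA) + (R₀.map C) * ((X : Polynomial R) ^ ℓ • S.map C) = 1 := by
    have hg := geom_sum_mul tA ℓ
    have h1' : P * (1 - tA) = 1 - tA ^ ℓ := by
      rw [mul_sub_one] at hg
      rw [mul_one_sub]
      linear_combination (norm := noncomm_ring) - hg
    rw [h1']
    have hpow : tA ^ ℓ = (X : Polynomial R) ^ ℓ • ((R₀.map C) * (S.map C)) := by
      rw [htA, _root_.smul_pow, hpowmap, h1, Matrix.map_mul]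
    rw [hpow, Matrix.mul_smul]
    simp
  have hb21 : (-((X : Polynomial R) ^ ℓ • S.map C)) * (1 - tA)
      + (1 - tB) * ((X : Polynomial R) ^ ℓ • S.map C) = 0 := by
    have hSA : (S.map C) * (A.map C) = (B.map C) * (S.map C) := by
      rw [← Matrix.map_mul, ← Matrix.map_mul, h4]
    have e1 : ((X : Polynomial R) ^ ℓ • S.map C) * ((X : Polynomial R) • A.map C)
        = (X : Polynomial R) ^ (ℓ + 1) • (S.map C * A.map C) := by
      rw [Matrix.smul_mul, Matrix.mul_smul, smul_smul, pow_succ]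
    have e2 : ((X : Polynomial R) • B.map C) * ((X : Polynomial R) ^ ℓ • S.map C)
        = (X : Polynomial R) ^ (ℓ + 1) • (B.map C * S.map C) := by
      rw [Matrix.smul_mul, Matrix.mul_smul, smul_smul, pow_succ']
    have e0 : (-((X : Polynomial R) ^ ℓ • S.map C)) * (1 - (X : Polynomial R) • A.map C)
        + (1 - (X : Polynomial R) • B.map C) * ((X : Polynomial R) ^ ℓ • S.map C)
        = ((X : Polynomial R) ^ ℓ • S.map C) * ((X : Polynomial R) • A.map C)
          - ((X : Polynomial R) • B.map C) * ((X : Polynomial R) ^ ℓ • S.map C) := by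
      rw [Matrix.neg_mul, Matrix.mul_sub, Matrix.mul_one, Matrix.sub_mul, Matrix.one_mul]
      abel
    rw [e0, e1, e2, hSA, sub_self]
  have hUV : (Matrix.fromBlocks P (R₀.map C)
        (-((X : Polynomial R) ^ ℓ • S.map C)) (1 - tB)) *
      (Matrix.fromBlocks (1 - tA) 0 ((X : Polynomial R) ^ ℓ • S.map C) 1) =
      Matrix.fromBlocks 1 (R₀.map C) 0 (1 - tB) := by
    rw [Matrix.fromBlocks_multiply]
    rw [hb11, hb21]
    simp
  have hdet := congrArg Matrix.det hUV
  rw [Matrix.det_mul, Matrix.det_fromBlocks_zero₁₂, Matrix.det_fromBlocks_zero₂₁] at hdet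
  simpa using hdet

lemma pse_eval_zero_det {R : Type*} [CommRing R] {k : Type*} [Fintype k] [DecidableEq k]
    (M : Matrix k k R) :
    ((1 - (X : Polynomial R) • M.map C).det).eval 0 = 1 := by
  have h := (RingHom.map_det (evalRingHom (0 : R)) (1 - (X : Polynomial R) • M.map C)).symm
  have hmap : (1 - (X : Polynomial R) • M.map C).map (evalRingHom (0 : R)) = 1 := by
    ext i j
    by_cases hij : i = j <;>
      simp [Matrix.map_apply, Matrix.sub_apply, Matrix.smul_apply, Matrix.one_apply, hij]
  rw [RingHom.mapMatrix_apply, hmap, Matrix.det_one] at h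
  simpa using h.symm

/-- over an integral domain `R`, the intertwining matrix `U` of the
PSE equation has determinant 1 in `R[t]`. -/
theorem pse_intertwiner_det_one (R : Type*) [CommRing R] [IsDomain R] (n m ℓ : ℕ)
    (hℓ : 0 < ℓ)
    (A : Matrix (Fin n) (Fin n) R) (B : Matrix (Fin m) (Fin m) R)
    (R₀ : Matrix (Fin n) (Fin m) R) (S : Matrix (Fin m) (Fin n) R)
    (h1 : A ^ ℓ = R₀ * S) (h2 : B ^ ℓ = S * R₀)
    (h3 : A * R₀ = R₀ * B) (h4 : S * A = B * S) :
    let tA : Matrix (Fin n) (Fin n) (Polynomial R) :=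
      (X : Polynomial R) • A.map Polynomial.C
    let tB : Matrix (Fin m) (Fin m) (Polynomial R) :=
      (X : Polynomial R) • B.map Polynomial.C
    let R₀' : Matrix (Fin n) (Fin m) (Polynomial R) := R₀.map Polynomial.C
    let S' : Matrix (Fin m) (Fin n) (Polynomial R) := S.map Polynomial.C
    (Matrix.fromBlocks (∑ i ∈ Finset.range ℓ, tA ^ i) R₀'
        (-((X : Polynomial R) ^ ℓ • S')) (1 - tB)).det = 1 := by
  show (Matrix.fromBlocks (∑ i ∈ Finset.range ℓ, ((X : Polynomial R) • A.map C) ^ i) (R₀.map C)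
        (-((X : Polynomial R) ^ ℓ • S.map C)) (1 - (X : Polynomial R) • B.map C)).det = 1
  set u : Polynomial R :=
    (Matrix.fromBlocks (∑ i ∈ Finset.range ℓ, ((X : Polynomial R) • A.map C) ^ i) (R₀.map C)
        (-((X : Polynomial R) ^ ℓ • S.map C)) (1 - (X : Polynomial R) • B.map C)).det with hu
  set u' : Polynomial R :=
    (Matrix.fromBlocks (∑ i ∈ Finset.range ℓ, ((X : Polynomial R) • B.map C) ^ i) (S.map C)
        (-((X : Polynomial R) ^ ℓ • R₀.map C)) (1 - (X : Polynomial R) • A.map C)).det with hu'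
  set a : Polynomial R := (1 - (X : Polynomial R) • A.map C).det with ha
  set b : Polynomial R := (1 - (X : Polynomial R) • B.map C).det with hb
  have key1 : u * a = b := pse_key ℓ A B R₀ S h1 h4
  have key2 : u' * b = a := pse_key ℓ B A S R₀ h2 h3.symm
  have ea : a.eval 0 = 1 := pse_eval_zero_det A
  have eb : b.eval 0 = 1 := pse_eval_zero_det B
  have ha0 : a ≠ 0 := fun h => by simp [h] at ea
  have huu' : u * u' = 1 := by
    have : (u * u') * a = 1 * a := by
      rw [one_mul, mul_assoc, mul_comm u' a, ← mul_assoc, key1, mul_comm, key2]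
    exact mul_right_cancel₀ ha0 this
  obtain ⟨r, -, hr⟩ := Polynomial.isUnit_iff.mp (IsUnit.of_mul_eq_one _ huu')
  have hu0 : u.eval 0 = 1 := by
    have := congrArg (Polynomial.eval 0) key1
    rw [eval_mul, ea, eb, mul_one] at this
    exact this
  rw [← hr] at hu0 ⊢
  rw [eval_C] at hu0
  rw [hu0, Polynomial.C_1]
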